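/- The map X ↦ pad1(format(X)) from binary strings to finite sequences of elements of F_p is injective. -/

import Mathlib

/-- The (big-endian) numerical value of a bit string. -/
def blockVal (b : List Bool) : ℕ :=
  b.foldl (fun acc bit => 2 * acc + bit.toNat) 0

/-- The `i`-th (0-based) block of `X` after `pad1`: the block `X_{i+1}` of length `len`
is padded to `0^{m−len−2}||1||X_{i+1}`, whose value is `2^len + val(X_{i+1})`, in `F_p`. -/
def pad1Block (p n : ℕ) (X : List Bool) (i : ℕ) : ZMod p :=
  ((2 ^ ((X.drop (n * i)).take n).length + blockVal ((X.drop (n * i)).take n) : ℕ) : ZMod p)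

/-- Little-endian value of a bit string. -/
def fromBits : List Bool → ℕ
  | [] => 0
  | b :: l => b.toNat + 2 * fromBits l

lemma blockVal_foldl (l : List Bool) (a : ℕ) :
    l.foldl (fun acc bit => 2 * acc + bit.toNat) a = a * 2 ^ l.length + blockVal l := by
  induction l generalizing a with
  | nil => simp [blockVal]
  | cons b l ih =>
    simp only [List.foldl_cons, blockVal, List.length_cons]
    rw [ih, ih (2 * 0 + b.toNat)]
    ring

lemma blockVal_lt (l : List Bool) : blockVal l < 2 ^ l.length := by
  induction l with
  | nil => simp [blockVal]
  | cons b l ih =>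
    have hv : blockVal (b :: l) = b.toNat * 2 ^ l.length + blockVal l := by
      simp only [blockVal, List.foldl_cons, Nat.mul_zero, Nat.zero_add]
      have h := blockVal_foldl l b.toNat
      simp only [blockVal] at h
      exact h
    rw [List.length_cons, pow_succ, hv]
    have hb : b.toNat ≤ 1 := Bool.toNat_le b
    have h2 : b.toNat * 2 ^ l.length ≤ 2 ^ l.length := by
      calc b.toNat * 2 ^ l.length ≤ 1 * 2 ^ l.length := Nat.mul_le_mul_right _ hb
      _ = 2 ^ l.length := one_mul _
    omega

lemma blockVal_eq_fromBits_reverse (l : List Bool) : blockVal l = fromBits l.reverse := by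
  have h : ∀ m : List Bool, fromBits m = m.foldr (fun b acc => b.toNat + 2 * acc) 0 := by
    intro m; induction m with
    | nil => rfl
    | cons b m ih => simp [fromBits, ih]
  rw [h, List.foldr_reverse, blockVal]
  congr 1
  funext a b
  omega

lemma fromBits_bit (b : Bool) (l : List Bool) : fromBits (b :: l) = Nat.bit b (fromBits l) := by
  cases b <;> simp [fromBits, Nat.bit] <;> omega

lemma fromBits_pos : ∀ l : List Bool, l.getLast? = some true → 0 < fromBits l
  | [], h => by simp at h
  | [b], h => by
      simp only [List.getLast?_singleton, Option.some.injEq] at h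
      subst h; simp [fromBits]
  | b :: c :: l, h => by
      have h' : (c :: l).getLast? = some true := by
        rwa [List.getLast?_cons_cons] at h
      have h2 := fromBits_pos (c :: l) h'
      simp only [fromBits] at h2 ⊢
      omega

lemma bits_fromBits : ∀ l : List Bool, l.getLast? = some true → (fromBits l).bits = l
  | [], h => by simp at h
  | b :: l, h => by
      rw [fromBits_bit]
      rcases eq_or_ne l [] with rfl | hl
      · simp only [List.getLast?_singleton, Option.some.injEq] at h
        subst h
        simp [fromBits, Nat.bit]
      · obtain ⟨c, l', rfl⟩ := List.exists_cons_of_ne_nil hl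
        have h' : (c :: l').getLast? = some true := by
          rwa [List.getLast?_cons_cons] at h
        have hpos := fromBits_pos _ h'
        rw [Nat.bits_append_bit _ _ (fun h0 => absurd h0 (by omega)),
          bits_fromBits _ h']

lemma decode_encode (b : List Bool) :
    (blockVal (true :: b) : ℕ).bits.reverse.tail = b := by
  have h1 : blockVal (true :: b) = fromBits (b.reverse ++ [true]) := by
    rw [blockVal_eq_fromBits_reverse]; simp
  have h2 : (b.reverse ++ [true]).getLast? = some true := by
    simp
  rw [h1, bits_fromBits _ h2]
  simp

lemma blockVal_true_cons (b : List Bool) :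
    blockVal (true :: b) = 2 ^ b.length + blockVal b := by
  have : blockVal (true :: b) = 1 * 2 ^ b.length + blockVal b := by
    simpa [blockVal] using blockVal_foldl b 1
  omega

lemma div_ceil_succ (n L : ℕ) (hn : 0 < n) (hL : 1 ≤ L) :
    (L + n - 1) / n = (L - n + n - 1) / n + 1 := by
  obtain ⟨a, rfl⟩ : ∃ a, L = a + 1 := ⟨L - 1, by omega⟩
  have hL' : a + 1 + n - 1 = a + n := by omega
  rw [hL', Nat.add_div_right a hn]
  congr 1
  rcases le_or_gt n a with h | h
  · have : a + 1 - n + n - 1 = a := by omega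
    rw [this]
  · have h1 : a / n = 0 := Nat.div_eq_of_lt h
    have h2 : a + 1 - n + n - 1 < n := by omega
    rw [h1, Nat.div_eq_of_lt h2]

lemma join_chunks (n : ℕ) (hn : 0 < n) : ∀ X : List Bool,
    ((List.range ((X.length + n - 1) / n)).map (fun i => (X.drop (n * i)).take n)).flatten = X
  | [] => by
      simp [Nat.div_eq_of_lt (by omega : n - 1 < n)]
  | x :: X => by
      have hL : 1 ≤ (x :: X).length := by simp
      rw [div_ceil_succ n _ hn hL]
      have hdroplen : ((x :: X).drop n).length = (x :: X).length - n := List.length_drop ..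
      rw [← hdroplen, List.range_succ_eq_map, List.map_cons]
      have hrec : (((x :: X).drop n).length + n - 1) / n ≤ ((x :: X).length + n - 1) / n :=
        Nat.div_le_div_right (by omega)
      have ih := join_chunks n hn ((x :: X).drop n)
      have hmapeq : (List.map (fun i => ((x :: X).drop (n * i)).take n)
            (List.map Nat.succ (List.range ((((x :: X).drop n).length + n - 1) / n)))) =
          (List.map (fun i => (((x :: X).drop n).drop (n * i)).take n)
            (List.range ((((x :: X).drop n).length + n - 1) / n))) := by
        rw [List.map_map]
        apply List.map_congr_left
        intro i _
        simp only [Function.comp_apply, List.drop_drop]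
        congr 2
        rw [Nat.succ_eq_add_one]
        ring
      rw [hmapeq, List.flatten_cons, ih]
      simpa using List.take_append_drop n (x :: X)
  termination_by X => X.length
  decreasing_by simp; omega

/-- The map `X ↦ pad1(format(X))` from binary strings to finite sequences of elements of
`F_p` is injective. -/
theorem pad1_injective (p m n : ℕ) [NeZero p] (hp : p.Prime)
    (hpl : 2 ^ (m - 1) < p) (hpu : p < 2 ^ m) (hn : 0 < n) (hnm : n + 2 ≤ m) :
    Function.Injective (fun X : List Bool =>
      (List.range ((X.length + n - 1) / n)).map (fun i => pad1Block p n X i)) := by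
  apply Function.LeftInverse.injective
    (g := fun l : List (ZMod p) => (l.map (fun v => v.val.bits.reverse.tail)).flatten)
  intro X
  simp only
  rw [List.map_map]
  have hdec : ∀ i, ((fun v : ZMod p => v.val.bits.reverse.tail) ∘ pad1Block p n X) i
      = (X.drop (n * i)).take n := by
    intro i
    set blk := (X.drop (n * i)).take n with hblk
    have hlen : blk.length ≤ n := by
      rw [hblk]; exact List.length_take_le ..
    have hlt : 2 ^ blk.length + blockVal blk < p := by
      have h1 : blockVal blk < 2 ^ blk.length := blockVal_lt blk
      have h2 : (2 : ℕ) ^ blk.length ≤ 2 ^ n := Nat.pow_le_pow_right (by norm_num) hlen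
      have h3 : (2 : ℕ) ^ (n + 1) ≤ 2 ^ (m - 1) := Nat.pow_le_pow_right (by norm_num) (by omega)
      have h4 : (2 : ℕ) ^ (n + 1) = 2 ^ n + 2 ^ n := by ring
      omega
    have hval : (pad1Block p n X i).val = blockVal (true :: blk) := by
      rw [pad1Block, ← hblk, ZMod.val_natCast_of_lt hlt, blockVal_true_cons]
    simp only [Function.comp_apply, hval, decode_encode]
  rw [List.map_congr_left (fun i _ => hdec i)]
  exact join_chunks n hn X
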